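/- For all κ ∉ −ℕ, m ≥ n, and each index i with 2 < i ≤ N: D_i(x_i ω_{mn}) = (1 + (N−3)κ) ω_{mn} + κ((1,i) + (2,i)) ω_{mn}, and consequently D_i(x_i ω_{mn}) − κ Σ_{j<i} (i,j)ω_{mn} = ((N−i)κ + 1) ω_{mn}; moreover (i,j)ω_{mn} = ω_{mn} for all 2 < i < j ≤ N. -/

import Mathlib

open MvPolynomial

noncomputable section

/-- Pochhammer symbol `(a)_j = a(a+1)⋯(a+j−1)`. -/
def poch (a : ℝ) (j : ℕ) : ℝ := (ascPochhammer ℝ j).eval a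

/-- The coefficient of `s^a` in `∏ᵢ (1 − s xᵢ)^{−κ}`, namely
`∑_{|α|=a} ∏ᵢ ((κ)_{αᵢ}/αᵢ!) x^α`, obtained as the degree-`a` homogeneous
component of the suitably truncated product of binomial series. -/
def genCoeff (σ : Type) [Fintype σ] [DecidableEq σ] (κ : ℝ) (a : ℕ) : MvPolynomial σ ℝ :=
  MvPolynomial.homogeneousComponent a
    (∏ i : σ, ∑ k ∈ Finset.range (a + 1), C (poch κ k / (Nat.factorial k : ℝ)) * X i ^ k)

/-- The polynomials `p_{mn}`, defined by the generating function
`∑ p_{mn} s^m t^n = (1−s x₁)⁻¹ (1−t x₂)⁻¹ ∏ᵢ ((1−s xᵢ)(1−t xᵢ))^{−κ}`;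
here `x1`, `x2` are the distinguished first and second variables. -/
def ppoly (σ : Type) [Fintype σ] [DecidableEq σ] (x1 x2 : σ) (κ : ℝ) (m n : ℕ) :
    MvPolynomial σ ℝ :=
  (∑ a ∈ Finset.range (m + 1), X x1 ^ (m - a) * genCoeff σ κ a) *
  (∑ b ∈ Finset.range (n + 1), X x2 ^ (n - b) * genCoeff σ κ b)

/-- `ω_{mn}` for `m ≥ n`. -/
def omegaAux (σ : Type) [Fintype σ] [DecidableEq σ] (x1 x2 : σ) (κ : ℝ) (m n : ℕ) :
    MvPolynomial σ ℝ :=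
  ppoly σ x1 x2 κ m n +
  ∑ j ∈ Finset.Icc 1 n,
    (poch (-κ) j * poch ((m : ℝ) - n + 1) (j - 1) /
        (poch (κ + (m : ℝ) - n + 1) j * (Nat.factorial j : ℝ))) •
      (((m : ℝ) - n + j) • ppoly σ x1 x2 κ (m + j) (n - j) +
        (j : ℝ) • ppoly σ x1 x2 κ (n - j) (m + j))

/-- `ω_{mn}` for all `m, n`: for `m ≥ n` by the explicit formula, and
`ω_{nm} = (1,2) ω_{mn}`. -/
def omegaP (σ : Type) [Fintype σ] [DecidableEq σ] (x1 x2 : σ) (κ : ℝ) (m n : ℕ) :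
    MvPolynomial σ ℝ :=
  if n ≤ m then omegaAux σ x1 x2 κ m n
  else rename (Equiv.swap x1 x2) (omegaAux σ x1 x2 κ n m)

/-- The Dunkl operator `D_i f = ∂f/∂xᵢ + κ ∑_{j≠i} (f − (i,j)f)/(xᵢ−xⱼ)`, with values
in the fraction field of the polynomial ring (the result is actually a polynomial since
`f − (i,j)f` is divisible by `xᵢ − xⱼ`). -/
def dunkl (σ : Type) [Fintype σ] [DecidableEq σ] (κ : ℝ) (i : σ) (f : MvPolynomial σ ℝ) :
    FractionRing (MvPolynomial σ ℝ) :=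
  algebraMap (MvPolynomial σ ℝ) (FractionRing (MvPolynomial σ ℝ)) (pderiv i f) +
  algebraMap (MvPolynomial σ ℝ) (FractionRing (MvPolynomial σ ℝ)) (C κ) *
    ∑ j ∈ Finset.univ.erase i,
      algebraMap (MvPolynomial σ ℝ) (FractionRing (MvPolynomial σ ℝ))
          (f - rename (Equiv.swap i j) f) /
        algebraMap (MvPolynomial σ ℝ) (FractionRing (MvPolynomial σ ℝ)) (X i - X j)


set_option linter.unusedSectionVars false
set_option linter.unusedVariables false
set_option linter.unusedTactic false

set_option linter.unusedSectionVars false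

lemma poch_zero' (κ : ℝ) : poch κ 0 = 1 := by simp [poch]

lemma poch_succ' (κ : ℝ) (r : ℕ) : poch κ (r + 1) = poch κ r * (κ + r) := by
  simp [poch, ascPochhammer_succ_right]

section Aux
variable {σ : Type} [Fintype σ] [DecidableEq σ] (κ : ℝ)

lemma prod_X_pow_fun (p : σ → ℕ) :
    (∏ i : σ, (X i : MvPolynomial σ ℝ) ^ p i) =
      monomial (Finsupp.equivFunOnFinite.symm p) 1 := by
  rw [← prod_X_pow_eq_monomial]
  refine (Finset.prod_subset (Finset.subset_univ _) ?_).symm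
  intro x _ hx
  have : (Finsupp.equivFunOnFinite.symm p) x = 0 := by
    simpa using (Finsupp.notMem_support_iff.mp hx)
  simp only [Finsupp.equivFunOnFinite_symm_apply_apply] at this ⊢
  simp [this]

lemma coeff_genCoeff' (a : ℕ) (γ : σ →₀ ℕ) :
    coeff γ (genCoeff σ κ a) =
      if γ.degree = a then ∏ i, poch κ (γ i) / ((γ i).factorial : ℝ) else 0 := by
  rw [genCoeff, coeff_homogeneousComponent]
  split_ifs with h
  · subst h
    rw [Finset.prod_univ_sum, coeff_sum]
    have hcoeff : ∀ p : σ → ℕ,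
        coeff γ (∏ i : σ, C (poch κ (p i) / ((p i).factorial : ℝ)) * X i ^ (p i))
          = if p = ⇑γ then ∏ i, poch κ (γ i) / ((γ i).factorial : ℝ) else 0 := by
      intro p
      rw [Finset.prod_mul_distrib, ← map_prod, prod_X_pow_fun, coeff_C_mul, coeff_monomial]
      have hiff : (Finsupp.equivFunOnFinite.symm p = γ) ↔ p = ⇑γ := by
        constructor
        · intro h; rw [← h]; rfl
        · intro h; subst h; simp
      split_ifs with h1 h2 h2
      · subst h2; simp
      · exact absurd (hiff.mp h1) h2
      · exact absurd (hiff.mpr h2) h1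
      · simp
    rw [Finset.sum_congr rfl (fun p _ => hcoeff p), Finset.sum_ite_eq' _ (⇑γ)]
    rw [if_pos]
    rw [Fintype.mem_piFinset]
    intro i
    rw [Finset.mem_range]
    have := Finsupp.le_degree i γ
    omega
  · rfl

lemma rename_genCoeff (e : Equiv.Perm σ) (a : ℕ) :
    rename e (genCoeff σ κ a) = genCoeff σ κ a := by
  ext γ
  have h1 : γ = Finsupp.mapDomain e (Finsupp.mapDomain e.symm γ) := by
    rw [← Finsupp.mapDomain_comp]
    simp only [Function.comp_def, Equiv.apply_symm_apply]
    exact (Finsupp.mapDomain_id).symm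
  have key : coeff γ (rename (⇑e) (genCoeff σ κ a))
      = coeff (Finsupp.mapDomain (⇑(Equiv.symm e)) γ) (genCoeff σ κ a) := by
    conv_lhs => rw [h1]
    rw [coeff_rename_mapDomain _ e.injective]
  rw [key, coeff_genCoeff', coeff_genCoeff']
  have happ : ∀ i, (Finsupp.mapDomain (⇑e.symm) γ) i = γ (e i) := by
    intro i
    rw [Finsupp.mapDomain_equiv_apply]
    simp
  have hdegsum : ∀ δ : σ →₀ ℕ, δ.degree = ∑ i : σ, δ i := by
    intro δ
    rw [Finsupp.degree]
    exact Finset.sum_subset (Finset.subset_univ _)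
      (fun x _ hx => Finsupp.notMem_support_iff.mp hx)
  have hdeg : (Finsupp.mapDomain (⇑e.symm) γ).degree = γ.degree := by
    rw [hdegsum, hdegsum]
    simp only [happ]
    exact Fintype.sum_equiv e _ _ (fun i => rfl)
  rw [hdeg]
  by_cases hd : γ.degree = a
  · rw [if_pos hd, if_pos hd]
    refine Fintype.prod_equiv e _ _ (fun i => ?_)
    rw [happ]
  · rw [if_neg hd, if_neg hd]

lemma degree_sum_univ (δ : σ →₀ ℕ) : δ.degree = ∑ i : σ, δ i := by
  rw [Finsupp.degree]
  exact Finset.sum_subset (Finset.subset_univ _)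
    (fun x _ hx => Finsupp.notMem_support_iff.mp hx)

lemma degree_add_single (γ : σ →₀ ℕ) (i : σ) :
    (γ + Finsupp.single i 1).degree = γ.degree + 1 := by
  rw [degree_sum_univ, degree_sum_univ]
  simp only [Finsupp.add_apply]
  rw [Finset.sum_add_distrib]
  congr 1
  simp [Finsupp.single_apply]

lemma coeff_pderiv (i : σ) (f : MvPolynomial σ ℝ) (γ : σ →₀ ℕ) :
    coeff γ (pderiv i f) = ((γ i : ℝ) + 1) * coeff (γ + Finsupp.single i 1) f := by
  induction f using MvPolynomial.induction_on' with
  | monomial u a =>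
    rw [pderiv_monomial, coeff_monomial, coeff_monomial]
    by_cases hu : 1 ≤ u i
    · have hle : Finsupp.single i 1 ≤ u := by
        rw [Finsupp.single_le_iff]; exact hu
      have hiff : (u - Finsupp.single i 1 = γ) ↔ (u = γ + Finsupp.single i 1) :=
        tsub_eq_iff_eq_add_of_le hle
      by_cases h : u - Finsupp.single i 1 = γ
      · rw [if_pos h, if_pos (hiff.mp h)]
        have : u i = γ i + 1 := by
          rw [hiff.mp h]; simp
        rw [this]
        push_cast
        ring
      · rw [if_neg h, if_neg (fun hh => h (hiff.mpr hh))]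
        simp
    · have hui : u i = 0 := by omega
      have h2 : u ≠ γ + Finsupp.single i 1 := by
        intro hh
        rw [hh] at hui
        simp at hui
      rw [if_neg h2, hui]
      simp
  | add p q hp hq => simp [map_add, coeff_add, hp, hq]; ring

lemma genCoeff_zero : genCoeff σ κ 0 = 1 := by
  ext γ
  rw [coeff_genCoeff', coeff_one]
  by_cases h : γ = 0
  · subst h; simp [map_zero, poch_zero']
  · rw [if_neg (fun hh => h ((Finsupp.degree_eq_zero_iff γ).mp hh)),
      if_neg (fun hh => h hh.symm)]

lemma pderiv_genCoeff_succ (i : σ) (a : ℕ) :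
    pderiv i (genCoeff σ κ (a + 1)) =
      X i * pderiv i (genCoeff σ κ a) + κ • genCoeff σ κ a := by
  ext γ
  rw [_root_.coeff_pderiv, coeff_add, coeff_X_mul', coeff_smul, smul_eq_mul]
  have hsplit : (∏ j : σ, poch κ (γ j) / ((γ j).factorial : ℝ))
      = (poch κ (γ i) / ((γ i).factorial : ℝ)) *
          ∏ j ∈ ({i}ᶜ : Finset σ), poch κ (γ j) / ((γ j).factorial : ℝ) :=
    Fintype.prod_eq_mul_prod_compl i _
  have hγadd : ∀ j, j ≠ i → ((γ + Finsupp.single i 1 : σ →₀ ℕ) j) = γ j := by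
    intro j hj
    simp [Finsupp.single_apply, Ne.symm hj]
  have hγaddi : (γ + Finsupp.single i 1 : σ →₀ ℕ) i = γ i + 1 := by simp
  have hprod : (∏ j : σ, poch κ ((γ + Finsupp.single i 1 : σ →₀ ℕ) j) /
        (((γ + Finsupp.single i 1 : σ →₀ ℕ) j).factorial : ℝ))
      = (poch κ (γ i + 1) / ((γ i + 1).factorial : ℝ)) *
        ∏ j ∈ ({i}ᶜ : Finset σ), poch κ (γ j) / ((γ j).factorial : ℝ) := by
    rw [Fintype.prod_eq_mul_prod_compl i, hγaddi]
    congr 1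
    refine Finset.prod_congr rfl (fun j hj => ?_)
    rw [hγadd j (by simpa using hj)]
  by_cases hi : i ∈ γ.support
  · have hgi : 1 ≤ γ i := by
      rw [Finsupp.mem_support_iff] at hi; omega
    rw [if_pos hi, _root_.coeff_pderiv]
    have h1 : (γ - Finsupp.single i 1) + Finsupp.single i 1 = γ := by
      ext j
      by_cases hji : j = i
      · subst hji
        simp only [Finsupp.add_apply, Finsupp.tsub_apply, Finsupp.single_apply, if_pos rfl,
          if_true]
        omega
      · simp [Finsupp.single_apply, Ne.symm hji, hji]
    have h2 : (γ - Finsupp.single i 1 : σ →₀ ℕ) i = γ i - 1 := by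
      simp [Finsupp.tsub_apply]
    rw [h1, h2, coeff_genCoeff', coeff_genCoeff', degree_add_single]
    by_cases hd : γ.degree = a
    · rw [if_pos (by omega : γ.degree + 1 = a + 1), if_pos hd]
      rw [hprod, hsplit]
      have hcast : ((γ i - 1 : ℕ) : ℝ) + 1 = (γ i : ℝ) := by
        push_cast [Nat.cast_sub hgi]; ring
      rw [hcast]
      have hfac : ((γ i + 1).factorial : ℝ) = ((γ i).factorial : ℝ) * ((γ i : ℝ)+1) := by
        rw [Nat.factorial_succ]; push_cast; ring
      rw [poch_succ' κ (γ i), hfac]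
      have hfne : ((γ i).factorial : ℝ) ≠ 0 := Nat.cast_ne_zero.mpr (Nat.factorial_ne_zero _)
      have hne : (γ i : ℝ) + 1 ≠ 0 := by positivity
      field_simp
      ring
    · rw [if_neg (by omega : ¬ γ.degree + 1 = a + 1), if_neg hd]
      ring
  · have hgi : γ i = 0 := Finsupp.notMem_support_iff.mp hi
    rw [if_neg hi, coeff_genCoeff', coeff_genCoeff', degree_add_single]
    by_cases hd : γ.degree = a
    · rw [if_pos (by omega : γ.degree + 1 = a + 1), if_pos hd]
      rw [hprod, hsplit, hgi]
      rw [poch_succ', poch_zero']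
      norm_num
    · rw [if_neg (by omega : ¬ γ.degree + 1 = a + 1), if_neg hd]
      ring

lemma pderiv_genCoeff (i : σ) (a : ℕ) :
    pderiv i (genCoeff σ κ a) =
      C κ * ∑ b ∈ Finset.range a, X i ^ (a - 1 - b) * genCoeff σ κ b := by
  induction a with
  | zero => simp [genCoeff_zero]
  | succ a ih =>
    rw [pderiv_genCoeff_succ, ih, Finset.sum_range_succ]
    have h1 : ∀ b ∈ Finset.range a,
        (X i : MvPolynomial σ ℝ) ^ (a + 1 - 1 - b) * genCoeff σ κ b
          = X i * (X i ^ (a - 1 - b) * genCoeff σ κ b) := by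
      intro b hb
      rw [Finset.mem_range] at hb
      rw [show a + 1 - 1 - b = (a - 1 - b) + 1 by omega, pow_succ]
      ring
    rw [Finset.sum_congr rfl h1, ← Finset.mul_sum]
    have h2 : (X i : MvPolynomial σ ℝ) ^ (a + 1 - 1 - a) = 1 := by
      rw [show a + 1 - 1 - a = 0 by omega, pow_zero]
    rw [h2, smul_eq_C_mul]
    ring

/-- `P_m` with distinguished variable `y`. -/
def Pgen (y : σ) (m : ℕ) : MvPolynomial σ ℝ :=
  ∑ a ∈ Finset.range (m + 1), X y ^ (m - a) * genCoeff σ κ a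

lemma ppoly_eq (x1 x2 : σ) (m n : ℕ) :
    ppoly σ x1 x2 κ m n = Pgen κ x1 m * Pgen κ x2 n := rfl

lemma rename_Pgen (e : Equiv.Perm σ) (y : σ) (m : ℕ) :
    rename e (Pgen κ y m) = Pgen κ (e y) m := by
  rw [Pgen, map_sum]
  refine Finset.sum_congr rfl (fun a _ => ?_)
  rw [map_mul, map_pow, rename_X, rename_genCoeff]

lemma Pgen_succ (y : σ) (m : ℕ) :
    Pgen κ y (m + 1) = X y * Pgen κ y m + genCoeff σ κ (m + 1) := by
  rw [Pgen, Finset.sum_range_succ, show m + 1 - (m+1) = 0 by omega, pow_zero, one_mul]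
  congr 1
  rw [Pgen, Finset.mul_sum]
  refine Finset.sum_congr rfl (fun a ha => ?_)
  rw [Finset.mem_range] at ha
  rw [show m + 1 - a = (m - a) + 1 by omega, pow_succ]
  ring

lemma Pgen_ident (i y : σ) (h : i ≠ y) (m : ℕ) :
    (X i - X y) * pderiv i (Pgen κ y m) = C κ * (Pgen κ i m - Pgen κ y m) := by
  induction m with
  | zero =>
    have : Pgen κ (σ := σ) y 0 = 1 := by
      rw [Pgen]
      simp [genCoeff_zero]
    have h2 : Pgen κ (σ := σ) i 0 = 1 := by
      rw [Pgen]
      simp [genCoeff_zero]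
    rw [this, h2]
    simp
  | succ m ih =>
    have hS : pderiv i (genCoeff σ κ (m+1)) = C κ * Pgen κ i m := by
      rw [pderiv_genCoeff, Pgen]
      rw [show m + 1 - 1 = m by omega]
    rw [Pgen_succ, Pgen_succ, map_add, pderiv_mul, pderiv_X_of_ne (Ne.symm h), hS]
    linear_combination (X y : MvPolynomial σ ℝ) * ih

lemma X_sub_X_ne_zero {i j : σ} (h : i ≠ j) : (X i - X j : MvPolynomial σ ℝ) ≠ 0 := by
  intro hh
  have := congrArg (coeff (Finsupp.single i 1)) hh
  rw [coeff_sub, coeff_X, coeff_X', if_neg (show ¬ (Finsupp.single j 1 = Finsupp.single i 1) by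
    simp only [Finsupp.single_eq_single_iff]
    push_neg
    simp [h, Ne.symm h])] at this
  simp at this

end Aux

section Field
variable {σ : Type} [Fintype σ] [DecidableEq σ] (κ : ℝ)

local notation "K" => FractionRing (MvPolynomial σ ℝ)
local notation "φ" => algebraMap (MvPolynomial σ ℝ) (FractionRing (MvPolynomial σ ℝ))

lemma phi_ne_zero {p : MvPolynomial σ ℝ} (hp : p ≠ 0) : φ p ≠ 0 := by
  intro h
  exact hp (IsFractionRing.injective (MvPolynomial σ ℝ) K (by rw [h, map_zero]))

lemma dunkl_zero (i : σ) : dunkl σ κ i 0 = 0 := by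
  simp [dunkl]

lemma dunkl_add (i : σ) (f g : MvPolynomial σ ℝ) :
    dunkl σ κ i (f + g) = dunkl σ κ i f + dunkl σ κ i g := by
  unfold dunkl
  have hterm : ∀ j ∈ Finset.univ.erase i,
      φ (f + g - rename (Equiv.swap i j) (f + g)) / φ (X i - X j)
        = φ (f - rename (Equiv.swap i j) f) / φ (X i - X j)
          + φ (g - rename (Equiv.swap i j) g) / φ (X i - X j) := by
    intro j _
    rw [show (f + g - rename (Equiv.swap i j) (f + g))
        = (f - rename (Equiv.swap i j) f) + (g - rename (Equiv.swap i j) g) by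
      rw [map_add]; ring]
    rw [map_add, add_div]
  rw [Finset.sum_congr rfl hterm, Finset.sum_add_distrib, map_add (pderiv i), map_add]
  ring

lemma dunkl_smul (i : σ) (c : ℝ) (f : MvPolynomial σ ℝ) :
    dunkl σ κ i (c • f) = φ (C c) * dunkl σ κ i f := by
  unfold dunkl
  have h : ∀ j : σ, (c • f - rename (Equiv.swap i j) (c • f))
      = C c * (f - rename (Equiv.swap i j) f) := by
    intro j
    rw [map_smul, smul_eq_C_mul, smul_eq_C_mul]
    ring
  have h2 : pderiv i (c • f) = C c * pderiv i f := by
    rw [Derivation.map_smul, smul_eq_C_mul]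
  have hterm : ∀ j ∈ Finset.univ.erase i,
      φ (c • f - rename (Equiv.swap i j) (c • f)) / φ (X i - X j)
        = φ (C c) * (φ (f - rename (Equiv.swap i j) f) / φ (X i - X j)) := by
    intro j _
    rw [h j, map_mul, mul_div_assoc]
  rw [Finset.sum_congr rfl hterm, ← Finset.mul_sum, h2, map_mul]
  ring

lemma dunkl_sum (i : σ) {β : Type*} (s : Finset β) (f : β → MvPolynomial σ ℝ) :
    dunkl σ κ i (∑ j ∈ s, f j) = ∑ j ∈ s, dunkl σ κ i (f j) := by
  induction s using Finset.cons_induction with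
  | empty => simp [dunkl_zero]
  | cons a s ha ih =>
    rw [Finset.sum_cons, Finset.sum_cons, dunkl_add, ih]

lemma dunkl_ppoly_zero (x1 x2 i : σ) (h12 : x1 ≠ x2) (hi1 : i ≠ x1) (hi2 : i ≠ x2)
    (m n : ℕ) : dunkl σ κ i (ppoly σ x1 x2 κ m n) = 0 := by
  unfold dunkl
  set f := ppoly σ x1 x2 κ m n with hf
  have hsub : ({x1, x2} : Finset σ) ⊆ Finset.univ.erase i := by
    intro j hj
    rw [Finset.mem_insert, Finset.mem_singleton] at hj
    rcases hj with h | h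
    · rw [h]; exact Finset.mem_erase.mpr ⟨Ne.symm hi1, Finset.mem_univ _⟩
    · rw [h]; exact Finset.mem_erase.mpr ⟨Ne.symm hi2, Finset.mem_univ _⟩
  have hzero : ∀ j ∈ Finset.univ.erase i, j ∉ ({x1, x2} : Finset σ) →
      φ (f - rename (Equiv.swap i j) f) / φ (X i - X j) = 0 := by
    intro j _ hj
    rw [Finset.mem_insert, Finset.mem_singleton] at hj
    push_neg at hj
    have : rename (Equiv.swap i j) f = f := by
      rw [hf, ppoly_eq, map_mul, rename_Pgen, rename_Pgen,
        Equiv.swap_apply_of_ne_of_ne (Ne.symm hi1) (Ne.symm hj.1),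
        Equiv.swap_apply_of_ne_of_ne (Ne.symm hi2) (Ne.symm hj.2)]
    rw [this, sub_self, map_zero, zero_div]
  rw [← Finset.sum_subset hsub (fun j h1 h2 => hzero j h1 h2)]
  rw [Finset.sum_pair h12]
  -- now the two surviving terms
  have key : ∀ (y : σ) (hy : i ≠ y) (k : ℕ) (g : MvPolynomial σ ℝ),
      φ (C κ) * (φ ((Pgen κ y k - Pgen κ i k) * g) / φ (X i - X y))
        = - φ (pderiv i (Pgen κ y k) * g) := by
    intro y hy k g
    have hne : φ (X i - X y) ≠ 0 := phi_ne_zero (X_sub_X_ne_zero hy)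
    have h2 : φ (C κ) * φ ((Pgen κ y k - Pgen κ i k) * g)
        = φ (X i - X y) * (- φ (pderiv i (Pgen κ y k) * g)) := by
      rw [← map_neg, ← map_mul, ← map_mul]
      exact congrArg _ (by linear_combination g * (Pgen_ident κ i y hy k))
    rw [mul_div_assoc', h2, mul_div_cancel_left₀ _ hne]
  have hr1 : rename (Equiv.swap i x1) f = Pgen κ i m * Pgen κ x2 n := by
    rw [hf, ppoly_eq, map_mul, rename_Pgen, rename_Pgen, Equiv.swap_apply_right,
      Equiv.swap_apply_of_ne_of_ne (Ne.symm hi2) h12.symm]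
  have hr2 : rename (Equiv.swap i x2) f = Pgen κ x1 m * Pgen κ i n := by
    rw [hf, ppoly_eq, map_mul, rename_Pgen, rename_Pgen, Equiv.swap_apply_right,
      Equiv.swap_apply_of_ne_of_ne (Ne.symm hi1) h12]
  have e1 : f - rename (Equiv.swap i x1) f = (Pgen κ x1 m - Pgen κ i m) * Pgen κ x2 n := by
    rw [hr1, hf, ppoly_eq]; ring
  have e2 : f - rename (Equiv.swap i x2) f = (Pgen κ x2 n - Pgen κ i n) * Pgen κ x1 m := by
    rw [hr2, hf, ppoly_eq]; ring
  have hd : pderiv i f = pderiv i (Pgen κ x1 m) * Pgen κ x2 n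
      + pderiv i (Pgen κ x2 n) * Pgen κ x1 m := by
    rw [hf, ppoly_eq, pderiv_mul]; ring
  rw [mul_add, e1, e2, key x1 hi1 m _, key x2 hi2 n _, hd, map_add, map_mul, map_mul]
  ring

lemma dunkl_X_mul (i : σ) (f : MvPolynomial σ ℝ) :
    dunkl σ κ i (X i * f) = φ f + φ (X i) * dunkl σ κ i f
      + φ (C κ) * ∑ j ∈ Finset.univ.erase i, φ (rename (Equiv.swap i j) f) := by
  unfold dunkl
  have hterm : ∀ j ∈ Finset.univ.erase i,
      φ (X i * f - rename (Equiv.swap i j) (X i * f)) / φ (X i - X j)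
        = φ (X i) * (φ (f - rename (Equiv.swap i j) f) / φ (X i - X j))
          + φ (rename (Equiv.swap i j) f) := by
    intro j hj
    have hij : i ≠ j := (Finset.mem_erase.mp hj).1.symm
    have hne : φ (X i - X j) ≠ 0 := phi_ne_zero (X_sub_X_ne_zero hij)
    have hpoly : X i * f - rename (Equiv.swap i j) (X i * f)
        = X i * (f - rename (Equiv.swap i j) f)
          + (X i - X j) * rename (Equiv.swap i j) f := by
      rw [map_mul, rename_X, Equiv.swap_apply_left]
      ring
    rw [hpoly, map_add, add_div, map_mul]
    rw [mul_div_assoc]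
    congr 1
    rw [map_mul, mul_comm (φ (X i - X j)), mul_div_assoc, div_self hne, mul_one]
  rw [Finset.sum_congr rfl hterm]
  have hder : pderiv i (X i * f) = f + X i * pderiv i f := by
    rw [pderiv_mul, pderiv_X_self]
    ring
  rw [Finset.sum_add_distrib, ← Finset.mul_sum, hder, map_add, map_mul]
  ring

end Field


section OmegaLemmas
variable {σ : Type} [Fintype σ] [DecidableEq σ] (κ : ℝ)

local notation "K" => FractionRing (MvPolynomial σ ℝ)
local notation "φ" => algebraMap (MvPolynomial σ ℝ) (FractionRing (MvPolynomial σ ℝ))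

lemma rename_ppoly (x1 x2 : σ) (e : Equiv.Perm σ) (h1 : e x1 = x1) (h2 : e x2 = x2)
    (m n : ℕ) : rename e (ppoly σ x1 x2 κ m n) = ppoly σ x1 x2 κ m n := by
  rw [ppoly_eq, map_mul, rename_Pgen, rename_Pgen, h1, h2]

lemma rename_omegaAux (x1 x2 : σ) (e : Equiv.Perm σ) (h1 : e x1 = x1) (h2 : e x2 = x2)
    (m n : ℕ) : rename e (omegaAux σ x1 x2 κ m n) = omegaAux σ x1 x2 κ m n := by
  rw [omegaAux, map_add, rename_ppoly κ x1 x2 e h1 h2, map_sum]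
  congr 1
  refine Finset.sum_congr rfl (fun j _ => ?_)
  rw [map_smul, map_add, map_smul, map_smul,
    rename_ppoly κ x1 x2 e h1 h2, rename_ppoly κ x1 x2 e h1 h2]

lemma rename_omegaP (x1 x2 : σ) (m n : ℕ) (hmn : n ≤ m) (i j : σ)
    (hi1 : i ≠ x1) (hi2 : i ≠ x2) (hj1 : j ≠ x1) (hj2 : j ≠ x2) :
    rename (Equiv.swap i j) (omegaP σ x1 x2 κ m n) = omegaP σ x1 x2 κ m n := by
  rw [omegaP, if_pos hmn]
  exact rename_omegaAux κ x1 x2 _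
    (Equiv.swap_apply_of_ne_of_ne (Ne.symm hi1) (Ne.symm hj1))
    (Equiv.swap_apply_of_ne_of_ne (Ne.symm hi2) (Ne.symm hj2)) m n

lemma dunkl_omegaP_zero (x1 x2 i : σ) (h12 : x1 ≠ x2) (hi1 : i ≠ x1) (hi2 : i ≠ x2)
    (m n : ℕ) (hmn : n ≤ m) : dunkl σ κ i (omegaP σ x1 x2 κ m n) = 0 := by
  have h2 : ∑ j ∈ Finset.Icc 1 n, dunkl σ κ i
      ((poch (-κ) j * poch ((m : ℝ) - n + 1) (j - 1) /
        (poch (κ + (m : ℝ) - n + 1) j * (Nat.factorial j : ℝ))) •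
      (((m : ℝ) - n + j) • ppoly σ x1 x2 κ (m + j) (n - j) +
        (j : ℝ) • ppoly σ x1 x2 κ (n - j) (m + j))) = 0 := by
    refine Finset.sum_eq_zero (fun j _ => ?_)
    rw [dunkl_smul, dunkl_add, dunkl_smul, dunkl_smul,
      dunkl_ppoly_zero κ x1 x2 i h12 hi1 hi2, dunkl_ppoly_zero κ x1 x2 i h12 hi1 hi2]
    ring
  rw [omegaP, if_pos hmn, omegaAux, dunkl_add, dunkl_sum,
    dunkl_ppoly_zero κ x1 x2 i h12 hi1 hi2, h2, add_zero]

lemma dunkl_X_mul_omegaP (x1 x2 i : σ) (h12 : x1 ≠ x2) (hi1 : i ≠ x1) (hi2 : i ≠ x2)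
    (m n : ℕ) (hmn : n ≤ m) :
    dunkl σ κ i (X i * omegaP σ x1 x2 κ m n) =
      φ (omegaP σ x1 x2 κ m n
        + C κ * (rename (Equiv.swap i x1) (omegaP σ x1 x2 κ m n)
          + rename (Equiv.swap i x2) (omegaP σ x1 x2 κ m n)
          + ((Fintype.card σ - 3 : ℕ) : ℝ) • omegaP σ x1 x2 κ m n)) := by
  set ω := omegaP σ x1 x2 κ m n with hω
  rw [dunkl_X_mul, dunkl_omegaP_zero κ x1 x2 i h12 hi1 hi2 m n hmn, mul_zero, add_zero]
  have hsub : ({x1, x2} : Finset σ) ⊆ Finset.univ.erase i := by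
    intro j hj
    rw [Finset.mem_insert, Finset.mem_singleton] at hj
    rcases hj with h | h
    · rw [h]; exact Finset.mem_erase.mpr ⟨Ne.symm hi1, Finset.mem_univ _⟩
    · rw [h]; exact Finset.mem_erase.mpr ⟨Ne.symm hi2, Finset.mem_univ _⟩
  have hsum : ∑ j ∈ Finset.univ.erase i, φ (rename (Equiv.swap i j) ω)
      = φ (rename (Equiv.swap i x1) ω + rename (Equiv.swap i x2) ω
          + ((Fintype.card σ - 3 : ℕ) : ℝ) • ω) := by
    rw [← Finset.sum_sdiff hsub, Finset.sum_pair h12]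
    have hconst : ∀ j ∈ Finset.univ.erase i \ ({x1, x2} : Finset σ),
        φ (rename (Equiv.swap i j) ω) = φ ω := by
      intro j hj
      rw [Finset.mem_sdiff, Finset.mem_insert, Finset.mem_singleton] at hj
      push_neg at hj
      rw [hω, rename_omegaP κ x1 x2 m n hmn i j hi1 hi2 hj.2.1 hj.2.2]
    rw [Finset.sum_congr rfl hconst, Finset.sum_const]
    have hcard : (Finset.univ.erase i \ ({x1, x2} : Finset σ)).card
        = Fintype.card σ - 3 := by
      rw [Finset.card_sdiff_of_subset hsub, Finset.card_erase_of_mem (Finset.mem_univ _),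
        Finset.card_univ, Finset.card_pair h12]
      omega
    have hC : φ (C ((Fintype.card σ - 3 : ℕ) : ℝ))
        = ((Fintype.card σ - 3 : ℕ) : FractionRing (MvPolynomial σ ℝ)) := by
      rw [show (C ((Fintype.card σ - 3 : ℕ) : ℝ) : MvPolynomial σ ℝ)
          = ((Fintype.card σ - 3 : ℕ) : MvPolynomial σ ℝ) by simp,
        map_natCast]
    rw [hcard, map_add, map_add, smul_eq_C_mul, map_mul, hC, nsmul_eq_mul]
    ring
  rw [hsum, ← map_mul, ← map_add]

end OmegaLemmas


/-- The polynomials `q_{mn}`, defined by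
`∑ q_{mn} u^m v^n = ∑ p_{ij} (u+v)^i (u−v)^j`; explicitly
`q_{mn} = ∑_{i+j=m+n} p_{ij} · (coeff of u^m v^n in (u+v)^i (u−v)^j)`. -/
def qpoly (σ : Type) [Fintype σ] [DecidableEq σ] (x1 x2 : σ) (κ : ℝ) (m n : ℕ) :
    MvPolynomial σ ℝ :=
  ∑ i ∈ Finset.range (m + n + 1),
    (∑ a ∈ Finset.range (m + 1),
        (i.choose a : ℝ) * ((m + n - i).choose (m - a) : ℝ) *
          (-1 : ℝ) ^ ((m + n - i) - (m - a))) •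
      ppoly σ x1 x2 κ i (m + n - i)

/-- The symmetric Krawtchouk polynomial `K_m(t;n)` with parameters `(n, 1/2)`. -/
def kraw (n m : ℕ) (t : ℝ) : ℝ :=
  ((n.choose m : ℝ))⁻¹ *
    ∑ j ∈ Finset.range (m + 1),
      (-1 : ℝ) ^ (m - j) * poch (t - n) (m - j) * poch (-t) j /
        ((Nat.factorial (m - j) : ℝ) * (Nat.factorial j : ℝ))

/-- The two-variable polynomials `f_{mn}` (for `m ≥ n`). -/
def fmn (κ : ℝ) (m n : ℕ) : MvPolynomial (Fin 2) ℝ :=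
  (X 0 * X 1) ^ n *
    ∑ j ∈ Finset.range (m - n + 1),
      C (poch (κ + 1) (m - n - j) * poch κ j /
          ((Nat.factorial (m - n - j) : ℝ) * (Nat.factorial j : ℝ))) *
        X 0 ^ (m - n - j) * X 1 ^ j

/-- The alternating polynomial `a_N = ∏_{i<j} (xᵢ − xⱼ)`. -/
def altPoly (N : ℕ) : MvPolynomial (Fin N) ℝ :=
  ∏ p ∈ Finset.univ.filter (fun p : Fin N × Fin N => p.1 < p.2), (X p.1 - X p.2)

/-- `A_n(u;κ)`: the coefficient of `v^n` in `(1−(u+v))^{−κ} (1−(u−v))^{−κ}`,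
as a formal power series in `u`. -/
def Aser (κ : ℝ) (n : ℕ) : PowerSeries ℝ :=
  PowerSeries.mk fun m =>
    ∑ k ∈ Finset.range (m + n + 1),
      (poch κ k / (Nat.factorial k : ℝ)) *
        (poch κ (m + n - k) / (Nat.factorial (m + n - k) : ℝ)) *
        ∑ a ∈ Finset.range (m + 1),
          (k.choose a : ℝ) * ((m + n - k).choose (m - a) : ℝ) *
            (-1 : ℝ) ^ ((m + n - k) - (m - a))

/-- `B_n(u;κ)`: the coefficient of `v^n` in `(1−(u+v))^{−κ−1} (1−(u−v))^{−κ}`,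
as a formal power series in `u`. -/
def Bser (κ : ℝ) (n : ℕ) : PowerSeries ℝ :=
  PowerSeries.mk fun m =>
    ∑ k ∈ Finset.range (m + n + 1),
      (poch (κ + 1) k / (Nat.factorial k : ℝ)) *
        (poch κ (m + n - k) / (Nat.factorial (m + n - k) : ℝ)) *
        ∑ a ∈ Finset.range (m + 1),
          (k.choose a : ℝ) * ((m + n - k).choose (m - a) : ℝ) *
            (-1 : ℝ) ^ ((m + n - k) - (m - a))

/-- For `κ ∉ −ℕ`, `m ≥ n`, and each (1-based) index `2 < i ≤ N`
(here `i : Fin N` with `2 ≤ i`, so the 1-based index is `i + 1`):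
`Dᵢ(xᵢ ω_{mn}) = (1+(N−3)κ) ω_{mn} + κ((1,i)+(2,i)) ω_{mn}`, and consequently
`Dᵢ(xᵢ ω_{mn}) − κ ∑_{j<i} (i,j)ω_{mn} = ((N−i)κ+1) ω_{mn}`;
moreover `(i,j)ω_{mn} = ω_{mn}` for all `2 < i < j ≤ N`. -/
theorem omega_dunkl_higher_index (N : ℕ) (hN : 3 ≤ N) (κ : ℝ)
    (hκ : ∀ k : ℕ, κ ≠ -(k + 1 : ℝ)) (m n : ℕ) (hmn : n ≤ m) :
    (∀ i : Fin N, 2 ≤ (i : ℕ) →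
      dunkl (Fin N) κ i (X i * omegaP (Fin N) ⟨0, by omega⟩ ⟨1, by omega⟩ κ m n) =
        algebraMap (MvPolynomial (Fin N) ℝ) (FractionRing (MvPolynomial (Fin N) ℝ))
          ((1 + ((N : ℝ) - 3) * κ) • omegaP (Fin N) ⟨0, by omega⟩ ⟨1, by omega⟩ κ m n +
            κ • (rename (Equiv.swap (⟨0, by omega⟩ : Fin N) i)
                (omegaP (Fin N) ⟨0, by omega⟩ ⟨1, by omega⟩ κ m n) +
              rename (Equiv.swap (⟨1, by omega⟩ : Fin N) i)
                (omegaP (Fin N) ⟨0, by omega⟩ ⟨1, by omega⟩ κ m n))) ∧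
      dunkl (Fin N) κ i (X i * omegaP (Fin N) ⟨0, by omega⟩ ⟨1, by omega⟩ κ m n) -
          algebraMap (MvPolynomial (Fin N) ℝ) (FractionRing (MvPolynomial (Fin N) ℝ))
            (C κ * ∑ j ∈ Finset.Iio i,
              rename (Equiv.swap i j) (omegaP (Fin N) ⟨0, by omega⟩ ⟨1, by omega⟩ κ m n)) =
        algebraMap (MvPolynomial (Fin N) ℝ) (FractionRing (MvPolynomial (Fin N) ℝ))
          ((((N : ℝ) - ((i : ℕ) + 1)) * κ + 1) •
            omegaP (Fin N) ⟨0, by omega⟩ ⟨1, by omega⟩ κ m n)) ∧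
    ∀ i j : Fin N, 2 ≤ (i : ℕ) → i < j →
      rename (Equiv.swap i j) (omegaP (Fin N) ⟨0, by omega⟩ ⟨1, by omega⟩ κ m n) =
        omegaP (Fin N) ⟨0, by omega⟩ ⟨1, by omega⟩ κ m n := by
  have h0 : 0 < N := by omega
  have h1 : 1 < N := by omega
  set x1 : Fin N := ⟨0, h0⟩ with hx1def
  set x2 : Fin N := ⟨1, h1⟩ with hx2def
  have h12 : x1 ≠ x2 := by
    simp [hx1def, hx2def, Fin.ext_iff]
  set ω := omegaP (Fin N) x1 x2 κ m n with hωdef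
  have hcast3 : ((N - 3 : ℕ) : ℝ) = (N : ℝ) - 3 := by
    push_cast [Nat.cast_sub hN]
    ring
  constructor
  · intro i hi
    have hi1 : i ≠ x1 := by
      intro h; rw [h] at hi; simp [hx1def] at hi
    have hi2 : i ≠ x2 := by
      intro h; rw [h] at hi; simp [hx2def] at hi
    constructor
    · -- first identity
      rw [dunkl_X_mul_omegaP κ x1 x2 i h12 hi1 hi2 m n hmn]
      refine congrArg _ ?_
      rw [Equiv.swap_comm x1 i, Equiv.swap_comm x2 i, Fintype.card_fin, ← hωdef]
      rw [smul_eq_C_mul, smul_eq_C_mul, smul_eq_C_mul, hcast3]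
      simp only [C_add, C_sub, C_mul, C_1, map_ofNat]
      push_cast
      ring
    · -- second identity
      rw [dunkl_X_mul_omegaP κ x1 x2 i h12 hi1 hi2 m n hmn, ← map_sub]
      refine congrArg _ ?_
      have hsub : ({x1, x2} : Finset (Fin N)) ⊆ Finset.Iio i := by
        intro j hj
        rw [Finset.mem_insert, Finset.mem_singleton] at hj
        rcases hj with h | h <;> rw [h] <;> rw [Finset.mem_Iio, Fin.lt_def]
        · simp [hx1def]; omega
        · simp [hx2def]; omega
      have hsum : ∑ j ∈ Finset.Iio i, rename (Equiv.swap i j) ω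
          = rename (Equiv.swap i x1) ω + rename (Equiv.swap i x2) ω
            + (((i : ℕ) - 2 : ℕ) : ℝ) • ω := by
        rw [← Finset.sum_sdiff hsub, Finset.sum_pair h12]
        have hconst : ∀ j ∈ Finset.Iio i \ ({x1, x2} : Finset (Fin N)),
            rename (Equiv.swap i j) ω = ω := by
          intro j hj
          rw [Finset.mem_sdiff, Finset.mem_insert, Finset.mem_singleton] at hj
          push_neg at hj
          exact rename_omegaP κ x1 x2 m n hmn i j hi1 hi2 hj.2.1 hj.2.2
        rw [Finset.sum_congr rfl hconst, Finset.sum_const]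
        have hcard : (Finset.Iio i \ ({x1, x2} : Finset (Fin N))).card = (i : ℕ) - 2 := by
          rw [Finset.card_sdiff_of_subset hsub, Finset.card_pair h12, Fin.card_Iio]
        rw [hcard, Nat.cast_smul_eq_nsmul]
        ring
      rw [hsum, Fintype.card_fin, ← hωdef]
      have hcasti : (((i : ℕ) - 2 : ℕ) : ℝ) = ((i : ℕ) : ℝ) - 2 := by
        push_cast [Nat.cast_sub hi]
        ring
      rw [hcasti, smul_eq_C_mul, smul_eq_C_mul, smul_eq_C_mul, hcast3]
      simp only [C_add, C_sub, C_mul, C_1, map_ofNat]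
      push_cast
      ring
  · intro i j hi hij
    have hij' : 2 ≤ (j : ℕ) := by
      have := Fin.lt_def.mp hij
      omega
    have hi1 : i ≠ x1 := by
      intro h; rw [h] at hi; simp [hx1def] at hi
    have hi2 : i ≠ x2 := by
      intro h; rw [h] at hi; simp [hx2def] at hi
    have hj1 : j ≠ x1 := by
      intro h; rw [h] at hij'; simp [hx1def] at hij'
    have hj2 : j ≠ x2 := by
      intro h; rw [h] at hij'; simp [hx2def] at hij'
    exact rename_omegaP κ x1 x2 m n hmn i j hi1 hi2 hj1 hj2
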